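/- Let T be a tournament and A a subset of V(T) with |A| ≥ 4. Then A is an acyclic component of T if and only if A is a monomorphic component of T. -/

import Mathlib

universe u v

/-- `r` is a tournament relation on `V`: irreflexive and, for distinct vertices,
exactly one of the two directed edges is present. -/
def IsTournament {V : Type u} (r : V → V → Prop) : Prop :=
  (∀ x, ¬ r x x) ∧ ∀ x y : V, x ≠ y → (r x y ↔ ¬ r y x)

/-- A subset `A` is autonomous in the tournament `r`. -/
def Autonomous {V : Type u} (r : V → V → Prop) (A : Set V) : Prop :=
  ∀ x ∈ A, ∀ x' ∈ A, ∀ y ∉ A, (r x y ↔ r x' y)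

/-- A subset `A` is acyclic: it contains no 3-cycle. -/
def AcyclicSet {V : Type u} (r : V → V → Prop) (A : Set V) : Prop :=
  ¬ ∃ a ∈ A, ∃ b ∈ A, ∃ c ∈ A, r a b ∧ r b c ∧ r c a

/-- The acyclic component of a vertex `x`: the union of all acyclic autonomous
subsets containing `x`. -/
def acyclicComponent {V : Type u} (r : V → V → Prop) (x : V) : Set V :=
  ⋃₀ {A : Set V | x ∈ A ∧ Autonomous r A ∧ AcyclicSet r A}

/-- `A` is an acyclic component of the tournament `r`. -/
def IsAcyclicComponent {V : Type u} (r : V → V → Prop) (A : Set V) : Prop :=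
  ∃ x, A = acyclicComponent r x

/-- A tournament is acyclically indecomposable if every acyclic autonomous subset
has at most one element. -/
def AcyclicallyIndecomposable {V : Type u} (r : V → V → Prop) : Prop :=
  ∀ A : Set V, Autonomous r A → AcyclicSet r A → A.Subsingleton

/-- The type of acyclic components of `r`. -/
def AcComp {V : Type u} (r : V → V → Prop) : Type u :=
  {A : Set V // IsAcyclicComponent r A}

/-- The quotient tournament `Ť` on the set of acyclic components. -/
def quotRel {V : Type u} (r : V → V → Prop) : AcComp r → AcComp r → Prop :=
  fun A B => A ≠ B ∧ ∃ x ∈ A.val, ∃ y ∈ B.val, r x y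

/-- The lexicographical sum of the tournaments `rels i` indexed by the tournament `d`. -/
def lexSumRel {I : Type u} {F : I → Type v} (d : I → I → Prop)
    (rels : ∀ i, F i → F i → Prop) : (Σ i, F i) → (Σ i, F i) → Prop :=
  fun p q => (p.1 ≠ q.1 ∧ d p.1 q.1) ∨
    ∃ h : p.1 = q.1, rels q.1 (cast (congrArg F h) p.2) q.2

/-- The subtournaments induced on the finite sets `s` and `t` are isomorphic. -/
def InducedIso {V : Type u} (r : V → V → Prop) (s t : Finset V) : Prop :=
  ∃ e : {x // x ∈ s} ≃ {x // x ∈ t},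
    ∀ a b : {x // x ∈ s}, r a.val b.val ↔ r (e a).val (e b).val

/-- The profile of a tournament: the number of isomorphism classes of subtournaments
induced on `n`-element subsets of the vertex set. -/
noncomputable def profile {V : Type u} (r : V → V → Prop) (n : ℕ) : ℕ :=
  Nat.card (Quot (fun s t : {w : Finset V // w.card = n} => InducedIso r s.val t.val))

/-- `r` is (isomorphic to) a lexicographical sum of acyclic tournaments indexed by a
finite tournament. -/
def IsFiniteLexSumOfAcyclic {V : Type u} (r : V → V → Prop) : Prop :=
  ∃ (I : Type) (d : I → I → Prop) (F : I → Type u)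
    (rels : ∀ i, F i → F i → Prop),
    Finite I ∧ IsTournament d ∧
    (∀ i, IsTournament (rels i) ∧ AcyclicSet (rels i) Set.univ) ∧
    ∃ e : V ≃ (Σ i, F i), ∀ x y, r x y ↔ lexSumRel d rels (e x) (e y)

/-- A bundled tournament (vertex type together with its edge relation). -/
structure Tour : Type 1 where
  V : Type
  rel : V → V → Prop

/-- `S` is embeddable in the tournament `r`: `S` is isomorphic to a subtournament of `r`. -/
def Tour.EmbedsIn {W : Type u} (S : Tour) (r : W → W → Prop) : Prop :=
  ∃ f : S.V → W, Function.Injective f ∧ ∀ x y, S.rel x y ↔ r (f x) (f y)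

/-- The profile of a bundled tournament. -/
noncomputable def Tour.profile (T : Tour) (n : ℕ) : ℕ := _root_.profile T.rel n

/-- The quotient tournament `Ť` of a bundled tournament, on its acyclic components. -/
def Tour.check (T : Tour) : Tour := ⟨AcComp T.rel, quotRel T.rel⟩

/-- The tournament `C3[C]` for an acyclic tournament `C = (A, lt)`. -/
def c3Rel {A : Type} (lt : A → A → Prop) : A × Fin 3 → A × Fin 3 → Prop :=
  fun p q => lt p.1 q.1 ∨ (p.1 = q.1 ∧
    ((p.2 = 0 ∧ q.2 = 1) ∨ (p.2 = 1 ∧ q.2 = 2) ∨ (p.2 = 2 ∧ q.2 = 0)))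

/-- The tournament `V[C]` for an acyclic tournament `C = (A, lt)`; `none` is the extra vertex. -/
def vRel {A : Type} (lt : A → A → Prop) (p q : Option (A × Fin 2)) : Prop :=
  match p, q with
  | some p, some q => lt p.1 q.1 ∨ (p.1 = q.1 ∧ p.2 = 0 ∧ q.2 = 1)
  | none, some q => q.2 = 0
  | some p, none => p.2 = 1
  | none, none => False

/-- The tournament `T[C]` for an acyclic tournament `C = (A, lt)`. -/
def tRel {A : Type} (lt : A → A → Prop) : A × Fin 2 → A × Fin 2 → Prop :=
  fun p q =>
    (p.2 = 0 ∧ q.2 = 0 ∧ lt p.1 q.1) ∨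
    (p.1 = q.1 ∧ p.2 = 0 ∧ q.2 = 1) ∨
    (p.2 = 1 ∧ q.2 = 1 ∧ lt p.1 q.1) ∨
    (p.2 = 1 ∧ q.2 = 0 ∧ lt q.1 p.1) ∨
    (p.2 = 0 ∧ q.2 = 1 ∧ lt q.1 p.1)

/-- The tournament `U[C]` for an acyclic tournament `C = (A, lt)`. -/
def uRel {A : Type} (lt : A → A → Prop) : A × Fin 2 → A × Fin 2 → Prop :=
  fun p q =>
    (p.2 = 0 ∧ q.2 = 0 ∧ lt p.1 q.1) ∨
    (p.1 = q.1 ∧ p.2 = 0 ∧ q.2 = 1) ∨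
    (p.2 = 1 ∧ q.2 = 1 ∧ lt q.1 p.1) ∨
    (p.2 = 0 ∧ q.2 = 1 ∧ lt p.1 q.1) ∨
    (p.2 = 1 ∧ q.2 = 0 ∧ lt p.1 q.1)

/-- The tournament `H[C]` for an acyclic tournament `C = (A, lt)`. -/
def hRel {A : Type} (lt : A → A → Prop) : A × Fin 2 → A × Fin 2 → Prop :=
  fun p q =>
    (p.2 = 0 ∧ q.2 = 0 ∧ lt p.1 q.1) ∨
    (p.1 = q.1 ∧ p.2 = 0 ∧ q.2 = 1) ∨
    (p.2 = 1 ∧ q.2 = 1 ∧ lt p.1 q.1) ∨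
    (p.2 = 1 ∧ q.2 = 0 ∧ lt q.1 p.1) ∨
    (p.2 = 1 ∧ q.2 = 0 ∧ lt p.1 q.1)

/-- The tournament `K[C]` for an acyclic tournament `C = (A, lt)`. -/
def kRel {A : Type} (lt : A → A → Prop) : A × Fin 2 → A × Fin 2 → Prop :=
  fun p q =>
    (p.2 = 0 ∧ q.2 = 0 ∧ lt p.1 q.1) ∨
    (p.1 = q.1 ∧ p.2 = 0 ∧ q.2 = 1) ∨
    (p.2 = 1 ∧ q.2 = 1 ∧ lt q.1 p.1) ∨
    (p.2 = 1 ∧ q.2 = 0 ∧ lt q.1 p.1) ∨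
    (p.2 = 1 ∧ q.2 = 0 ∧ lt p.1 q.1)

def c3Tour (A : Type) (lt : A → A → Prop) : Tour := ⟨A × Fin 3, c3Rel lt⟩
def vTour (A : Type) (lt : A → A → Prop) : Tour := ⟨Option (A × Fin 2), vRel lt⟩
def tTour (A : Type) (lt : A → A → Prop) : Tour := ⟨A × Fin 2, tRel lt⟩
def uTour (A : Type) (lt : A → A → Prop) : Tour := ⟨A × Fin 2, uRel lt⟩
def hTour (A : Type) (lt : A → A → Prop) : Tour := ⟨A × Fin 2, hRel lt⟩
def kTour (A : Type) (lt : A → A → Prop) : Tour := ⟨A × Fin 2, kRel lt⟩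

/-- The order type `ω`: the natural numbers with the usual strict order. -/
def omegaLT : ℕ → ℕ → Prop := fun m n => m < n

/-- The order type `ω*`: the natural numbers with the reversed strict order. -/
def omegaStarLT : ℕ → ℕ → Prop := fun m n => n < m

/-- The set `𝔅` of twelve tournaments. -/
def frakB : List Tour :=
  [c3Tour ℕ omegaLT, vTour ℕ omegaLT, tTour ℕ omegaLT,
   uTour ℕ omegaLT, hTour ℕ omegaLT, kTour ℕ omegaLT,
   c3Tour ℕ omegaStarLT, vTour ℕ omegaStarLT, tTour ℕ omegaStarLT,
   uTour ℕ omegaStarLT, hTour ℕ omegaStarLT, kTour ℕ omegaStarLT]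

/-- The set `𝔅_{n̲}` of six tournaments built on the acyclic tournament `({0,…,n−1},<)`. -/
def frakBn (n : ℕ) : List Tour :=
  [c3Tour (Fin n) (· < ·), vTour (Fin n) (· < ·), tTour (Fin n) (· < ·),
   uTour (Fin n) (· < ·), hTour (Fin n) (· < ·), kTour (Fin n) (· < ·)]

/-- `B` is a monomorphic part of the tournament `r`: any two finite subsets of the same
size which agree outside `B` induce isomorphic subtournaments. -/
def MonomorphicPart {V : Type u} (r : V → V → Prop) (B : Set V) : Prop :=
  ∀ s t : Finset V, s.card = t.card → ((s : Set V) \ B = (t : Set V) \ B) →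
    InducedIso r s t

/-- The monomorphic component of a vertex `x`: the union (= the largest) of all
monomorphic parts containing `x`. -/
def monomorphicComponent {V : Type u} (r : V → V → Prop) (x : V) : Set V :=
  ⋃₀ {B : Set V | x ∈ B ∧ MonomorphicPart r B}


section AuxProof

variable {V : Type u} {r : V → V → Prop}

namespace TournAux

lemma irrefl (hT : IsTournament r) (a : V) : ¬ r a a := hT.1 a

lemma asymm (hT : IsTournament r) {a b : V} (h : r a b) : ¬ r b a := by
  by_cases hab : a = b
  · subst hab; exact absurd h (hT.1 a)
  · exact fun h' => ((hT.2 a b hab).1 h) h'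

lemma total (hT : IsTournament r) {a b : V} (hab : a ≠ b) (h : ¬ r a b) : r b a := by
  by_contra h'
  exact h ((hT.2 a b hab).2 h')

lemma ne_of_r (hT : IsTournament r) {a b : V} (h : r a b) : a ≠ b := by
  rintro rfl; exact hT.1 a h

lemma iso_refl (s : Finset V) : InducedIso r s s := ⟨Equiv.refl _, fun _ _ => Iff.rfl⟩

lemma iso_trans {s t u : Finset V} (h1 : InducedIso r s t) (h2 : InducedIso r t u) :
    InducedIso r s u := by
  obtain ⟨e1, he1⟩ := h1; obtain ⟨e2, he2⟩ := h2
  exact ⟨e1.trans e2, fun a b => (he1 a b).trans (he2 _ _)⟩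

lemma no_iso_sink (hT : IsTournament r) {s t : Finset V}
    (hiso : InducedIso r s t)
    (hs : ∀ a ∈ s, ∃ z ∈ s, r a z)
    (ht : ∃ w ∈ t, ∀ z ∈ t, ¬ r w z) : False := by
  obtain ⟨e, he⟩ := hiso
  obtain ⟨w, hw, hsink⟩ := ht
  obtain ⟨z, hz, hrz⟩ := hs (e.symm ⟨w, hw⟩).1 (e.symm ⟨w, hw⟩).2
  have h2 := (he (e.symm ⟨w, hw⟩) ⟨z, hz⟩).1 hrz
  rw [Equiv.apply_symm_apply] at h2
  exact hsink _ (e ⟨z, hz⟩).2 h2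

variable [DecidableEq V]

lemma card3 {a b c : V} (hab : a ≠ b) (hac : a ≠ c) (hbc : b ≠ c) :
    ({a, b, c} : Finset V).card = 3 := by
  rw [Finset.card_insert_of_notMem (by simp [hab, hac]),
      Finset.card_insert_of_notMem (by simp [hbc]), Finset.card_singleton]

lemma card4 {a b c d : V} (hab : a ≠ b) (hac : a ≠ c) (had : a ≠ d)
    (hbc : b ≠ c) (hbd : b ≠ d) (hcd : c ≠ d) :
    ({a, b, c, d} : Finset V).card = 4 := by
  rw [Finset.card_insert_of_notMem (by simp [hab, hac, had]), card3 hbc hbd hcd]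

lemma diff3_0 {B : Set V} {a b c : V} (ha : a ∈ B) (hb : b ∈ B) (hc : c ∈ B) :
    (↑({a, b, c} : Finset V) : Set V) \ B = ∅ := by
  ext z
  simp only [Finset.coe_insert, Finset.coe_singleton, Set.mem_diff, Set.mem_insert_iff,
    Set.mem_singleton_iff, Set.mem_empty_iff_false, iff_false, not_and]
  rintro (rfl | rfl | rfl) h <;> exact h ‹_›

lemma diff3_1 {B : Set V} {a b y : V} (ha : a ∈ B) (hb : b ∈ B) (hy : y ∉ B) :
    (↑({a, b, y} : Finset V) : Set V) \ B = {y} := by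
  ext z
  simp only [Finset.coe_insert, Finset.coe_singleton, Set.mem_diff, Set.mem_insert_iff,
    Set.mem_singleton_iff]
  constructor
  · rintro ⟨rfl | rfl | rfl, h⟩
    · exact absurd ha h
    · exact absurd hb h
    · rfl
  · rintro rfl; exact ⟨Or.inr (Or.inr rfl), hy⟩

lemma diff3_2 {B : Set V} {a y z : V} (ha : a ∈ B) (hy : y ∉ B) (hz : z ∉ B) :
    (↑({a, y, z} : Finset V) : Set V) \ B = {y, z} := by
  ext w
  simp only [Finset.coe_insert, Finset.coe_singleton, Set.mem_diff, Set.mem_insert_iff,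
    Set.mem_singleton_iff]
  constructor
  · rintro ⟨rfl | rfl | rfl, h⟩
    · exact absurd ha h
    · exact Or.inl rfl
    · exact Or.inr rfl
  · rintro (rfl | rfl)
    · exact ⟨Or.inr (Or.inl rfl), hy⟩
    · exact ⟨Or.inr (Or.inr rfl), hz⟩

lemma diff4_3 {B : Set V} {a y z w : V} (ha : a ∈ B) (hy : y ∉ B) (hz : z ∉ B) (hw : w ∉ B) :
    (↑({a, y, z, w} : Finset V) : Set V) \ B = {y, z, w} := by
  ext v
  simp only [Finset.coe_insert, Finset.coe_singleton, Set.mem_diff, Set.mem_insert_iff,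
    Set.mem_singleton_iff]
  constructor
  · rintro ⟨rfl | rfl | rfl | rfl, h⟩
    · exact absurd ha h
    · exact Or.inl rfl
    · exact Or.inr (Or.inl rfl)
    · exact Or.inr (Or.inr rfl)
  · rintro (rfl | rfl | rfl)
    · exact ⟨Or.inr (Or.inl rfl), hy⟩
    · exact ⟨Or.inr (Or.inr (Or.inl rfl)), hz⟩
    · exact ⟨Or.inr (Or.inr (Or.inr rfl)), hw⟩

lemma card_insert_erase {s : Finset V} {a b : V} (ha : a ∈ s) (hb : b ∉ s) :
    (insert b (s.erase a)).card = s.card := by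
  rw [Finset.card_insert_of_notMem (fun h => hb (Finset.mem_of_mem_erase h)),
      Finset.card_erase_of_mem ha]
  exact Nat.succ_pred_eq_of_pos (Finset.card_pos.2 ⟨a, ha⟩)

lemma diff_insert_erase {B : Set V} {s : Finset V} {a b : V} (haB : a ∈ B) (hbB : b ∈ B) :
    (↑(insert b (s.erase a)) : Set V) \ B = (↑s : Set V) \ B := by
  ext z
  constructor
  · rintro ⟨hz, hzB⟩
    rw [Finset.mem_coe, Finset.mem_insert] at hz
    rcases hz with rfl | hz
    · exact absurd hbB hzB
    · exact ⟨Finset.mem_coe.2 (Finset.mem_of_mem_erase hz), hzB⟩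
  · rintro ⟨hz, hzB⟩
    refine ⟨?_, hzB⟩
    rw [Finset.mem_coe, Finset.mem_insert]
    exact Or.inr (Finset.mem_erase.2 ⟨fun h => hzB (h ▸ haB), Finset.mem_coe.1 hz⟩)

lemma move {B : Set V} (hB : MonomorphicPart r B) {s : Finset V} {a b : V}
    (ha : a ∈ s) (hb : b ∉ s) (haB : a ∈ B) (hbB : b ∈ B) :
    InducedIso r s (insert b (s.erase a)) :=
  hB s _ (card_insert_erase ha hb).symm (diff_insert_erase haB hbB).symm

lemma two_move {P Q : Set V} (hP : MonomorphicPart r P) (hQ : MonomorphicPart r Q)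
    {x a b : V} (hxP : x ∈ P) (hxQ : x ∈ Q) {s : Finset V}
    (has : a ∈ s) (hbs : b ∉ s) (haP : a ∈ P) (hbQ : b ∈ Q) :
    InducedIso r s (insert b (s.erase a)) := by
  have hba : b ≠ a := fun h => hbs (h ▸ has)
  by_cases hxs : x ∈ s
  · by_cases hxa : x = a
    · subst hxa; exact move hQ has hbs hxQ hbQ
    · have hbx : b ≠ x := fun h => hbs (h ▸ hxs)
      have h1 : InducedIso r s (insert b (s.erase x)) := move hQ hxs hbs hxQ hbQ
      have has' : a ∈ insert b (s.erase x) :=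
        Finset.mem_insert_of_mem (Finset.mem_erase.2 ⟨fun h => hxa h.symm, has⟩)
      have hxs' : x ∉ insert b (s.erase x) := by
        simp only [Finset.mem_insert, Finset.mem_erase]
        rintro (rfl | ⟨h, -⟩)
        · exact hbx rfl
        · exact h rfl
      have h2 : InducedIso r (insert b (s.erase x)) (insert x ((insert b (s.erase x)).erase a)) :=
        move hP has' hxs' haP hxP
      have heq : insert x ((insert b (s.erase x)).erase a) = insert b (s.erase a) := by
        ext z
        simp only [Finset.mem_insert, Finset.mem_erase]
        constructor
        · rintro (rfl | ⟨hza, rfl | ⟨hzx, hzs⟩⟩)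
          · exact Or.inr ⟨hxa, hxs⟩
          · exact Or.inl rfl
          · exact Or.inr ⟨hza, hzs⟩
        · rintro (rfl | ⟨hza, hzs⟩)
          · exact Or.inr ⟨hba, Or.inl rfl⟩
          · by_cases h : z = x
            · exact Or.inl h
            · exact Or.inr ⟨hza, Or.inr ⟨h, hzs⟩⟩
      rw [heq] at h2
      exact iso_trans h1 h2
  · by_cases hxb : x = b
    · subst hxb; exact move hP has hbs haP hxP
    · have h1 : InducedIso r s (insert x (s.erase a)) := move hP has hxs haP hxP
      have hx' : x ∈ insert x (s.erase a) := Finset.mem_insert_self _ _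
      have hb' : b ∉ insert x (s.erase a) := by
        simp only [Finset.mem_insert, Finset.mem_erase]
        rintro (rfl | ⟨-, h⟩)
        · exact hxb rfl
        · exact hbs h
      have h2 := move hQ hx' hb' hxQ hbQ
      have heq : (insert x (s.erase a)).erase x = s.erase a :=
        Finset.erase_insert (fun h => hxs (Finset.mem_of_mem_erase h))
      rw [heq] at h2
      exact iso_trans h1 h2

lemma union_mono (hT : IsTournament r) {B₁ B₂ : Set V} {x : V}
    (h1 : MonomorphicPart r B₁) (h2 : MonomorphicPart r B₂)
    (hx1 : x ∈ B₁) (hx2 : x ∈ B₂) : MonomorphicPart r (B₁ ∪ B₂) := by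
  intro s t hcard hdiff
  have key : ∀ n (s : Finset V), s.card = t.card →
      (↑s : Set V) \ (B₁ ∪ B₂) = ↑t \ (B₁ ∪ B₂) → (s \ t).card ≤ n → InducedIso r s t := by
    intro n
    induction n with
    | zero =>
      intro s hc hd hle
      have hempty : s \ t = ∅ := Finset.card_eq_zero.1 (Nat.le_zero.1 hle)
      have hsub : s ⊆ t := by
        intro z hz
        by_contra hzt
        have : z ∈ s \ t := Finset.mem_sdiff.2 ⟨hz, hzt⟩
        rw [hempty] at this
        exact absurd this (Finset.notMem_empty z)
      have : s = t := Finset.eq_of_subset_of_card_le hsub (le_of_eq hc.symm)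
      rw [this]; exact iso_refl t
    | succ n ihn =>
      intro s hc hd hle
      by_cases hst : s = t
      · rw [hst]; exact iso_refl t
      · have hsdne : (s \ t).Nonempty := by
          rw [Finset.sdiff_nonempty]
          intro hsub
          exact hst (Finset.eq_of_subset_of_card_le hsub (le_of_eq hc.symm))
        have htsne : (t \ s).Nonempty := by
          rw [Finset.sdiff_nonempty]
          intro hsub
          exact hst (Finset.eq_of_subset_of_card_le hsub (le_of_eq hc)).symm
        have hU : ∀ z ∈ s \ t, z ∈ B₁ ∪ B₂ := by
          intro z hz
          by_contra hzU
          have hz' := Finset.mem_sdiff.1 hz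
          have hmem : z ∈ (↑s : Set V) \ (B₁ ∪ B₂) := ⟨hz'.1, hzU⟩
          rw [hd] at hmem
          exact hz'.2 hmem.1
        have hU' : ∀ z ∈ t \ s, z ∈ B₁ ∪ B₂ := by
          intro z hz
          by_contra hzU
          have hz' := Finset.mem_sdiff.1 hz
          have hmem : z ∈ (↑t : Set V) \ (B₁ ∪ B₂) := ⟨hz'.1, hzU⟩
          rw [← hd] at hmem
          exact hz'.2 hmem.1
        obtain ⟨a, ha⟩ := hsdne
        obtain ⟨b, hb⟩ := htsne
        have ha' := Finset.mem_sdiff.1 ha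
        have hb' := Finset.mem_sdiff.1 hb
        have step : InducedIso r s (insert b (s.erase a)) → InducedIso r s t := by
          intro hiso
          have hcard' : (insert b (s.erase a)).card = t.card := by
            rw [card_insert_erase ha'.1 hb'.2]; exact hc
          have hd' : (↑(insert b (s.erase a)) : Set V) \ (B₁ ∪ B₂) = ↑t \ (B₁ ∪ B₂) := by
            rw [diff_insert_erase (hU a ha) (hU' b hb)]; exact hd
          have hmeas : ((insert b (s.erase a)) \ t).card ≤ n := by
            have heq : (insert b (s.erase a)) \ t = (s \ t).erase a := by
              ext z
              simp only [Finset.mem_sdiff, Finset.mem_insert, Finset.mem_erase]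
              constructor
              · rintro ⟨rfl | ⟨hza, hzs⟩, hzt⟩
                · exact absurd hb'.1 hzt
                · exact ⟨hza, hzs, hzt⟩
              · rintro ⟨hza, hzs, hzt⟩
                exact ⟨Or.inr ⟨hza, hzs⟩, hzt⟩
            rw [heq, Finset.card_erase_of_mem ha]
            omega
          exact iso_trans hiso (ihn _ hcard' hd' hmeas)
        rcases hU a ha with haB | haB <;> rcases hU' b hb with hbB | hbB
        · exact step (two_move h1 h1 hx1 hx1 ha'.1 hb'.2 haB hbB)
        · exact step (two_move h1 h2 hx1 hx2 ha'.1 hb'.2 haB hbB)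
        · exact step (two_move h2 h1 hx2 hx1 ha'.1 hb'.2 haB hbB)
        · exact step (two_move h2 h2 hx2 hx2 ha'.1 hb'.2 haB hbB)
  exact key (s \ t).card s hcard hdiff le_rfl

lemma exists_sink (hT : IsTournament r) {C : Set V} (hC : AcyclicSet r C) :
    ∀ w : Finset V, ↑w ⊆ C → w.Nonempty → ∃ a ∈ w, ∀ z ∈ w, ¬ r a z := by
  intro w
  induction w using Finset.induction_on with
  | empty => intro _ hne; exact absurd hne (by simp)
  | @insert v u hvu ih =>
    intro hw _
    by_cases hu : u.Nonempty
    · obtain ⟨a, hau, hsink⟩ := ih (fun z hz => hw (by simp [Finset.mem_coe.1 hz])) hu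
      by_cases hav : r a v
      · refine ⟨v, Finset.mem_insert_self _ _, ?_⟩
        intro z hz hrz
        rcases Finset.mem_insert.1 hz with rfl | hzu
        · exact hT.1 z hrz
        · by_cases hza : z = a
          · subst hza; exact asymm hT hav hrz
          · have hza' : r z a := total hT (fun h => hza h.symm) (hsink z hzu)
            exact hC ⟨a, hw (by simp [hau]), v, hw (by simp), z, hw (by simp [hzu]),
              hav, hrz, hza'⟩
      · refine ⟨a, Finset.mem_insert_of_mem hau, ?_⟩
        intro z hz
        rcases Finset.mem_insert.1 hz with rfl | hzu
        · exact hav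
        · exact hsink z hzu
    · rw [Finset.not_nonempty_iff_eq_empty.1 hu]
      refine ⟨v, by simp, ?_⟩
      intro z hz
      have : z = v := by simpa using hz
      subst this
      exact hT.1 z
  -- end

lemma bij_step (hT : IsTournament r) {C : Set V} (haut : Autonomous r C)
    (hacyc : AcyclicSet r C) :
    ∀ n (s t : Finset V), s.card = t.card → (↑s : Set V) \ C = ↑t \ C →
      ((↑s : Set V) ∩ C).ncard = n →
      ∃ f : V → V, Set.BijOn f ↑s ↑t ∧ (∀ v ∈ s, v ∉ C → f v = v) ∧
        (∀ v ∈ s, v ∈ C → f v ∈ C) ∧ (∀ v ∈ s, ∀ w ∈ s, (r v w ↔ r (f v) (f w))) := by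
  intro n
  induction n with
  | zero =>
    intro s t hcard hdiff hn
    have hfin : ((↑s : Set V) ∩ C).Finite := (s.finite_toSet).inter_of_left C
    have hST : ((↑s : Set V) ∩ C) = ∅ := (Set.ncard_eq_zero hfin).1 hn
    have htn : ((↑t : Set V) ∩ C).ncard = 0 := by
      have h1 : ((↑s : Set V) ∩ C).ncard + ((↑s : Set V) \ C).ncard = s.card := by
        rw [← Set.ncard_coe_finset s]
        exact Set.ncard_inter_add_ncard_diff_eq_ncard _ _ (s.finite_toSet)
      have h2 : ((↑t : Set V) ∩ C).ncard + ((↑t : Set V) \ C).ncard = t.card := by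
        rw [← Set.ncard_coe_finset t]
        exact Set.ncard_inter_add_ncard_diff_eq_ncard _ _ (t.finite_toSet)
      rw [hdiff] at h1
      omega
    have htT : ((↑t : Set V) ∩ C) = ∅ :=
      (Set.ncard_eq_zero ((t.finite_toSet).inter_of_left C)).1 htn
    have hst : s = t := by
      apply Finset.coe_injective
      apply Set.Subset.antisymm
      · intro z hz
        have hz' : z ∈ (↑s : Set V) \ C := ⟨hz, fun hzC => by
          have : z ∈ ((↑s : Set V) ∩ C) := ⟨hz, hzC⟩
          rw [hST] at this; exact this⟩
        rw [hdiff] at hz'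
        exact hz'.1
      · intro z hz
        have hz' : z ∈ (↑t : Set V) \ C := ⟨hz, fun hzC => by
          have : z ∈ ((↑t : Set V) ∩ C) := ⟨hz, hzC⟩
          rw [htT] at this; exact this⟩
        rw [← hdiff] at hz'
        exact hz'.1
    subst hst
    exact ⟨id, Set.bijOn_id _, fun _ _ _ => rfl, fun v _ hv => hv, fun _ _ _ _ => Iff.rfl⟩
  | succ n ihn =>
    intro s t hcard hdiff hn
    classical
    set sC := s.filter (fun v => v ∈ C) with hsC
    set tC := t.filter (fun v => v ∈ C) with htC
    have hsCcoe : (↑sC : Set V) = (↑s : Set V) ∩ C := by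
      ext z; simp [hsC, Finset.mem_filter]
    have htCcoe : (↑tC : Set V) = (↑t : Set V) ∩ C := by
      ext z; simp [htC, Finset.mem_filter]
    have hsCcard : sC.card = n + 1 := by
      have := Set.ncard_coe_finset sC
      rw [hsCcoe, hn] at this; exact this.symm
    have htn : ((↑t : Set V) ∩ C).ncard = n + 1 := by
      have h1 : ((↑s : Set V) ∩ C).ncard + ((↑s : Set V) \ C).ncard = s.card := by
        rw [← Set.ncard_coe_finset s]
        exact Set.ncard_inter_add_ncard_diff_eq_ncard _ _ (s.finite_toSet)
      have h2 : ((↑t : Set V) ∩ C).ncard + ((↑t : Set V) \ C).ncard = t.card := by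
        rw [← Set.ncard_coe_finset t]
        exact Set.ncard_inter_add_ncard_diff_eq_ncard _ _ (t.finite_toSet)
      rw [hdiff] at h1
      omega
    have htCcard : tC.card = n + 1 := by
      have := Set.ncard_coe_finset tC
      rw [htCcoe, htn] at this; exact this.symm
    have hsCne : sC.Nonempty := Finset.card_pos.1 (by omega)
    have htCne : tC.Nonempty := Finset.card_pos.1 (by omega)
    have hsCsub : (↑sC : Set V) ⊆ C := by rw [hsCcoe]; exact Set.inter_subset_right
    have htCsub : (↑tC : Set V) ⊆ C := by rw [htCcoe]; exact Set.inter_subset_right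
    obtain ⟨a, haC, hasink⟩ := exists_sink hT hacyc sC hsCsub hsCne
    obtain ⟨b, hbC, hbsink⟩ := exists_sink hT hacyc tC htCsub htCne
    have haS : a ∈ s := (Finset.mem_filter.1 haC).1
    have haCC : a ∈ C := (Finset.mem_filter.1 haC).2
    have hbT : b ∈ t := (Finset.mem_filter.1 hbC).1
    have hbCC : b ∈ C := (Finset.mem_filter.1 hbC).2
    -- the smaller sets
    have hcard' : (s.erase a).card = (t.erase b).card := by
      rw [Finset.card_erase_of_mem haS, Finset.card_erase_of_mem hbT, hcard]
    have hdiff' : (↑(s.erase a) : Set V) \ C = ↑(t.erase b) \ C := by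
      have e1 : (↑(s.erase a) : Set V) \ C = (↑s : Set V) \ C := by
        ext z
        simp only [Finset.coe_erase, Set.mem_diff, Set.mem_singleton_iff]
        constructor
        · rintro ⟨⟨hz, -⟩, hzC⟩; exact ⟨hz, hzC⟩
        · rintro ⟨hz, hzC⟩; exact ⟨⟨hz, fun h => hzC (h ▸ haCC)⟩, hzC⟩
      have e2 : (↑(t.erase b) : Set V) \ C = (↑t : Set V) \ C := by
        ext z
        simp only [Finset.coe_erase, Set.mem_diff, Set.mem_singleton_iff]
        constructor
        · rintro ⟨⟨hz, -⟩, hzC⟩; exact ⟨hz, hzC⟩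
        · rintro ⟨hz, hzC⟩; exact ⟨⟨hz, fun h => hzC (h ▸ hbCC)⟩, hzC⟩
      rw [e1, e2]; exact hdiff
    have hn' : ((↑(s.erase a) : Set V) ∩ C).ncard = n := by
      have e1 : (↑(s.erase a) : Set V) ∩ C = ((↑s : Set V) ∩ C) \ {a} := by
        ext z
        simp only [Finset.coe_erase, Set.mem_inter_iff, Set.mem_diff, Set.mem_singleton_iff]
        tauto
      rw [e1]
      rw [Set.ncard_diff_singleton_of_mem (show a ∈ (↑s : Set V) ∩ C from ⟨haS, haCC⟩), hn]
      omega
    obtain ⟨f', hbij', hid', hC', hpres'⟩ := ihn (s.erase a) (t.erase b) hcard' hdiff' hn'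
    refine ⟨fun v => if v = a then b else f' v, ?_, ?_, ?_, ?_⟩
    · constructor
      · -- MapsTo
        intro v hv
        by_cases hva : v = a
        · simp only [hva, if_pos rfl]; exact hbT
        · simp only [if_neg hva]
          have : v ∈ s.erase a := Finset.mem_erase.2 ⟨hva, hv⟩
          exact Finset.mem_coe.1 (Finset.mem_of_mem_erase (Finset.mem_coe.2 (hbij'.mapsTo this)))
      constructor
      · -- InjOn
        intro u hu v hv huv
        dsimp only at huv
        by_cases hua : u = a <;> by_cases hva : v = a
        · rw [hua, hva]
        · rw [if_pos hua, if_neg hva] at huv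
          have hv' : v ∈ s.erase a := Finset.mem_erase.2 ⟨hva, hv⟩
          have : f' v ∈ t.erase b := hbij'.mapsTo hv'
          exact absurd (huv ▸ this) (fun h => (Finset.mem_erase.1 h).1 rfl)
        · rw [if_neg hua, if_pos hva] at huv
          have hu' : u ∈ s.erase a := Finset.mem_erase.2 ⟨hua, hu⟩
          have : f' u ∈ t.erase b := hbij'.mapsTo hu'
          exact absurd (huv ▸ this) (fun h => (Finset.mem_erase.1 h).1 rfl)
        · rw [if_neg hua, if_neg hva] at huv
          exact hbij'.injOn (Finset.mem_erase.2 ⟨hua, hu⟩) (Finset.mem_erase.2 ⟨hva, hv⟩) huv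
      · -- SurjOn
        intro z hz
        by_cases hzb : z = b
        · exact ⟨a, haS, by simp [hzb]⟩
        · have hz' : z ∈ t.erase b := Finset.mem_erase.2 ⟨hzb, hz⟩
          obtain ⟨v, hv, hfv⟩ := hbij'.surjOn hz'
          have hv' := Finset.mem_erase.1 hv
          exact ⟨v, Finset.mem_of_mem_erase hv, by simp [if_neg hv'.1, hfv]⟩
    · intro v hv hvC
      have hva : v ≠ a := fun h => hvC (h ▸ haCC)
      simp only [if_neg hva]
      exact hid' v (Finset.mem_erase.2 ⟨hva, hv⟩) hvC
    · intro v hv hvC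
      by_cases hva : v = a
      · simp only [if_pos hva]; exact hbCC
      · simp only [if_neg hva]
        exact hC' v (Finset.mem_erase.2 ⟨hva, hv⟩) hvC
    · intro v hv w hw
      have htCfact : ∀ u, u ∈ s.erase a → u ∈ C → f' u ∈ tC ∧ f' u ≠ b := by
        intro u hu huC
        have h1 : f' u ∈ t.erase b := hbij'.mapsTo hu
        have h2 := Finset.mem_erase.1 h1
        exact ⟨Finset.mem_filter.2 ⟨h2.2, hC' u hu huC⟩, h2.1⟩
      dsimp only
      by_cases hva : v = a <;> by_cases hwa : w = a
      · rw [if_pos hva, if_pos hwa, hva, hwa]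
        exact iff_of_false (hT.1 a) (hT.1 b)
      · rw [if_pos hva, if_neg hwa, hva]
        have hw' : w ∈ s.erase a := Finset.mem_erase.2 ⟨hwa, hw⟩
        by_cases hwC : w ∈ C
        · obtain ⟨hmem, -⟩ := htCfact w hw' hwC
          exact iff_of_false (hasink w (Finset.mem_filter.2 ⟨hw, hwC⟩)) (hbsink _ hmem)
        · rw [hid' w hw' hwC]
          exact haut a haCC b hbCC w hwC
      · rw [if_neg hva, if_pos hwa, hwa]
        have hv' : v ∈ s.erase a := Finset.mem_erase.2 ⟨hva, hv⟩
        by_cases hvC : v ∈ C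
        · obtain ⟨hmem, hne⟩ := htCfact v hv' hvC
          refine iff_of_true ?_ ?_
          · exact total hT (fun h => hva h.symm) (hasink v (Finset.mem_filter.2 ⟨hv, hvC⟩))
          · exact total hT (fun h => hne h.symm) (hbsink _ hmem)
        · rw [hid' v hv' hvC]
          have hvb : v ≠ b := fun h => hvC (h ▸ hbCC)
          rw [hT.2 v a hva, hT.2 v b hvb, haut a haCC b hbCC v hvC]
      · rw [if_neg hva, if_neg hwa]
        exact hpres' v (Finset.mem_erase.2 ⟨hva, hv⟩) w (Finset.mem_erase.2 ⟨hwa, hw⟩)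

lemma acyc_auto_mono (hT : IsTournament r) {C : Set V} (haut : Autonomous r C)
    (hacyc : AcyclicSet r C) : MonomorphicPart r C := by
  intro s t hcard hdiff
  obtain ⟨f, hbij, -, -, hpres⟩ :=
    bij_step hT haut hacyc ((↑s : Set V) ∩ C).ncard s t hcard hdiff rfl
  exact ⟨hbij.equiv f, fun a b => hpres a.1 a.2 b.1 b.2⟩

lemma triple_sink_or (hT : IsTournament r) {p q z : V} (hpq : r p q) :
    (∃ w ∈ ({p, q, z} : Finset V), ∀ y ∈ ({p, q, z} : Finset V), ¬ r w y) ∨ (r q z ∧ r z p) := by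
  by_cases hqz : r q z
  · by_cases hzp : r z p
    · exact Or.inr ⟨hqz, hzp⟩
    · left
      refine ⟨z, by simp, ?_⟩
      intro y hy
      rcases Finset.mem_insert.1 hy with rfl | hy
      · exact hzp
      rcases Finset.mem_insert.1 hy with rfl | hy
      · exact asymm hT hqz
      · have : y = z := by simpa using hy
        subst this; exact hT.1 y
  · left
    refine ⟨q, by simp, ?_⟩
    intro y hy
    rcases Finset.mem_insert.1 hy with rfl | hy
    · exact asymm hT hpq
    rcases Finset.mem_insert.1 hy with rfl | hy
    · exact hT.1 y
    · have : y = z := by simpa using hy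
      subst this; exact hqz

lemma mono_acyclic (hT : IsTournament r) {B : Set V} (hB : MonomorphicPart r B)
    (h3 : ∀ a b c : V, ∃ d ∈ B, d ≠ a ∧ d ≠ b ∧ d ≠ c) : AcyclicSet r B := by
  rintro ⟨a, ha, b, hb, c, hc, hab, hbc, hca⟩
  have nab : a ≠ b := ne_of_r hT hab
  have nbc : b ≠ c := ne_of_r hT hbc
  have nca : c ≠ a := ne_of_r hT hca
  obtain ⟨d, hd, nda, ndb, ndc⟩ := h3 a b c
  have main : ∀ u v w : V, u ∈ B → v ∈ B → w ∈ B → u ≠ v → u ≠ w → v ≠ w →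
      r u w → r v w → False := by
    intro u v w hu hv hw huv huw hvw h1 h2
    have hiso := hB {a, b, c} {u, v, w}
      (by rw [card3 nab (Ne.symm nca) nbc, card3 huv huw hvw])
      (by rw [diff3_0 ha hb hc, diff3_0 hu hv hw])
    refine no_iso_sink hT hiso ?_ ⟨w, by simp, ?_⟩
    · intro z hz
      rcases Finset.mem_insert.1 hz with rfl | hz
      · exact ⟨b, by simp, hab⟩
      rcases Finset.mem_insert.1 hz with rfl | hz
      · exact ⟨c, by simp, hbc⟩
      · have : z = c := by simpa using hz
        subst this; exact ⟨a, by simp, hca⟩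
    · intro z hz
      rcases Finset.mem_insert.1 hz with rfl | hz
      · exact asymm hT h1
      rcases Finset.mem_insert.1 hz with rfl | hz
      · exact asymm hT h2
      · have : z = w := by simpa using hz
        subst this; exact hT.1 z
  by_cases hda : r d a <;> by_cases hdb : r d b <;> by_cases hdc : r d c
  · exact main d a b hd ha hb nda ndb nab hdb hab
  · exact main d a b hd ha hb nda ndb nab hdb hab
  · exact main d c a hd hc ha ndc nda nca hda hca
  · exact main b c d hb hc hd nbc (Ne.symm ndb) (Ne.symm ndc)
      (total hT ndb hdb) (total hT ndc hdc)
  · exact main d b c hd hb hc ndb ndc nbc hdc hbc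
  · exact main a c d ha hc hd (Ne.symm nca) (Ne.symm nda) (Ne.symm ndc)
      (total hT nda hda) (total hT ndc hdc)
  · exact main a b d ha hb hd nab (Ne.symm nda) (Ne.symm ndb)
      (total hT nda hda) (total hT ndb hdb)
  · exact main a b d ha hb hd nab (Ne.symm nda) (Ne.symm ndb)
      (total hT nda hda) (total hT ndb hdb)

lemma no_mixed_cycle (hT : IsTournament r) {B : Set V} (hB : MonomorphicPart r B)
    (h3 : ∀ a b c : V, ∃ d ∈ B, d ≠ a ∧ d ≠ b ∧ d ≠ c) :
    ∀ y ∉ B, ∀ u ∈ B, ∀ v ∈ B, ¬ (r u v ∧ r v y ∧ r y u) := by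
  rintro y hy u hu v hv ⟨huv, hvy, hyu⟩
  have nuv : u ≠ v := ne_of_r hT huv
  have nuy : u ≠ y := fun h => hy (h ▸ hu)
  have nvy : v ≠ y := fun h => hy (h ▸ hv)
  obtain ⟨d, hd, hdu, hdv, hdy⟩ := h3 u v y
  have main : ∀ p q : V, p ∈ B → q ∈ B → p ≠ q →
      (∃ w ∈ ({p, q, y} : Finset V), ∀ z ∈ ({p, q, y} : Finset V), ¬ r w z) → False := by
    intro p q hp hq hpq hsink
    have npy : p ≠ y := fun h => hy (h ▸ hp)
    have nqy : q ≠ y := fun h => hy (h ▸ hq)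
    have hiso := hB {u, v, y} {p, q, y}
      (by rw [card3 nuv nuy nvy, card3 hpq npy nqy])
      (by rw [diff3_1 hu hv hy, diff3_1 hp hq hy])
    refine no_iso_sink hT hiso ?_ hsink
    intro z hz
    rcases Finset.mem_insert.1 hz with rfl | hz
    · exact ⟨v, by simp, huv⟩
    rcases Finset.mem_insert.1 hz with rfl | hz
    · exact ⟨y, by simp, hvy⟩
    · have : z = y := by simpa using hz
      subst this; exact ⟨u, by simp, hyu⟩
  by_cases hud : r u d
  · rcases triple_sink_or hT (z := y) hud with hs | ⟨hdy', hyu'⟩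
    · exact main u d hu hd (ne_of_r hT hud) hs
    · by_cases hvd : r v d
      · rcases triple_sink_or hT (z := y) hvd with hs | ⟨-, hyv⟩
        · exact main v d hv hd (ne_of_r hT hvd) hs
        · exact asymm hT hvy hyv
      · have hdv' : r d v := total hT (Ne.symm hdv) hvd
        rcases triple_sink_or hT (z := y) hdv' with hs | ⟨-, hyd⟩
        · exact main d v hd hv hdv hs
        · exact asymm hT hdy' hyd
  · have hdu' : r d u := total hT (Ne.symm hdu) hud
    rcases triple_sink_or hT (z := y) hdu' with hs | ⟨huy', -⟩
    · exact main d u hd hu hdu hs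
    · exact asymm hT huy' hyu

lemma cut_trans (hT : IsTournament r) {B : Set V} (hB : MonomorphicPart r B)
    (h3 : ∀ a b c : V, ∃ d ∈ B, d ≠ a ∧ d ≠ b ∧ d ≠ c)
    {y d u : V} (hy : y ∉ B) (hd : d ∈ B) (hu : u ∈ B)
    (h1 : r d y) (h2 : r y u) : r d u := by
  have hdu : d ≠ u := by
    rintro rfl
    exact asymm hT h1 h2
  by_contra h
  exact no_mixed_cycle hT hB h3 y hy u hu d hd ⟨total hT hdu h, h1, h2⟩

lemma cut_meet2 (hT : IsTournament r) {B : Set V} (hB : MonomorphicPart r B)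
    (h3 : ∀ a b c : V, ∃ d ∈ B, d ≠ a ∧ d ≠ b ∧ d ≠ c)
    {y z d₁ d₂ : V} (hy : y ∉ B) (hz : z ∉ B) (hd₁ : d₁ ∈ B) (hd₂ : d₂ ∈ B)
    (h1 : r d₁ y) (h2 : r d₂ z) : ∃ d ∈ B, r d y ∧ r d z := by
  by_cases h : r d₁ z
  · exact ⟨d₁, hd₁, h1, h⟩
  · have hzd₁ : r z d₁ := total hT (fun he => hz (he ▸ hd₁)) h
    have hd₂d₁ : r d₂ d₁ := cut_trans hT hB h3 hz hd₂ hd₁ h2 hzd₁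
    by_cases h' : r d₂ y
    · exact ⟨d₂, hd₂, h', h2⟩
    · have hyd₂ : r y d₂ := total hT (fun he => hy (he ▸ hd₂)) h'
      exact absurd (cut_trans hT hB h3 hy hd₁ hd₂ h1 hyd₂) (asymm hT hd₂d₁)

lemma cut_meet3 (hT : IsTournament r) {B : Set V} (hB : MonomorphicPart r B)
    (h3 : ∀ a b c : V, ∃ d ∈ B, d ≠ a ∧ d ≠ b ∧ d ≠ c)
    {y z w d e : V} (hy : y ∉ B) (hz : z ∉ B) (hw : w ∉ B) (hd : d ∈ B) (he : e ∈ B)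
    (h1 : r d y) (h2 : r d z) (h3w : r e w) : ∃ f ∈ B, r f y ∧ r f z ∧ r f w := by
  by_cases h : r d w
  · exact ⟨d, hd, h1, h2, h⟩
  · have hwd : r w d := total hT (fun he' => hw (he' ▸ hd)) h
    have hed : r e d := cut_trans hT hB h3 hw he hd h3w hwd
    have hey : r e y := by
      by_contra h'
      have hye : r y e := total hT (fun he' => hy (he' ▸ he)) h'
      exact asymm hT hed (cut_trans hT hB h3 hy hd he h1 hye)
    have hez : r e z := by
      by_contra h'
      have hze : r z e := total hT (fun he' => hz (he' ▸ he)) h'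
      exact asymm hT hed (cut_trans hT hB h3 hz hd he h2 hze)
    exact ⟨e, he, hey, hez, h3w⟩

lemma cut_meetU2 (hT : IsTournament r) {B : Set V} (hB : MonomorphicPart r B)
    (h3 : ∀ a b c : V, ∃ d ∈ B, d ≠ a ∧ d ≠ b ∧ d ≠ c)
    {y z u₁ u₂ : V} (hy : y ∉ B) (hz : z ∉ B) (hu₁ : u₁ ∈ B) (hu₂ : u₂ ∈ B)
    (h1 : r y u₁) (h2 : r z u₂) : ∃ u ∈ B, r y u ∧ r z u := by
  by_cases h : r z u₁
  · exact ⟨u₁, hu₁, h1, h⟩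
  · have hu₁z : r u₁ z := by
      by_contra h'
      exact h (total hT (fun he => hz (he.symm ▸ hu₁)) h')
    have h12 : r u₁ u₂ := cut_trans hT hB h3 hz hu₁ hu₂ hu₁z h2
    by_cases h' : r y u₂
    · exact ⟨u₂, hu₂, h', h2⟩
    · have hu₂y : r u₂ y := by
        by_contra h''
        exact h' (total hT (fun he => hy (he.symm ▸ hu₂)) h'')
      exact absurd (cut_trans hT hB h3 hy hu₂ hu₁ hu₂y h1) (asymm hT h12)

lemma cut_meetU3 (hT : IsTournament r) {B : Set V} (hB : MonomorphicPart r B)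
    (h3 : ∀ a b c : V, ∃ d ∈ B, d ≠ a ∧ d ≠ b ∧ d ≠ c)
    {y z w u₁ u₂ : V} (hy : y ∉ B) (hz : z ∉ B) (hw : w ∉ B) (hu : u₁ ∈ B) (hu₂ : u₂ ∈ B)
    (h1 : r y u₁) (h2 : r z u₁) (h3w : r w u₂) : ∃ u ∈ B, r y u ∧ r z u ∧ r w u := by
  by_cases h : r w u₁
  · exact ⟨u₁, hu, h1, h2, h⟩
  · have hu₁w : r u₁ w := by
      by_contra h'
      exact h (total hT (fun he => hw (he.symm ▸ hu)) h')
    have h12 : r u₁ u₂ := cut_trans hT hB h3 hw hu hu₂ hu₁w h3w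
    have hyu₂ : r y u₂ := by
      by_contra h'
      have hu₂y : r u₂ y := total hT (fun he => hy (he ▸ hu₂)) h'
      exact absurd (cut_trans hT hB h3 hy hu₂ hu hu₂y h1) (asymm hT h12)
    have hzu₂ : r z u₂ := by
      by_contra h'
      have hu₂z : r u₂ z := total hT (fun he => hz (he ▸ hu₂)) h'
      exact absurd (cut_trans hT hB h3 hz hu₂ hu hu₂z h2) (asymm hT h12)
    exact ⟨u₂, hu₂, hyu₂, hzu₂, h3w⟩

lemma mono_subset_acyc_auto (hT : IsTournament r) {B : Set V} (hB : MonomorphicPart r B)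
    (s₄ : Finset V) (hs₄B : ↑s₄ ⊆ B) (hs₄c : s₄.card = 4) :
    ∃ C : Set V, B ⊆ C ∧ Autonomous r C ∧ AcyclicSet r C := by
  have h3 : ∀ a b c : V, ∃ d ∈ B, d ≠ a ∧ d ≠ b ∧ d ≠ c := by
    intro a b c
    have hcard : 1 ≤ (s₄ \ {a, b, c}).card := by
      have h1 : s₄.card ≤ (s₄ \ {a, b, c}).card + ({a, b, c} : Finset V).card :=
        Finset.card_le_card_sdiff_add_card
      have h2 : ({a, b, c} : Finset V).card ≤ 3 := by
        apply le_trans (Finset.card_insert_le _ _)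
        apply Nat.succ_le_succ
        apply le_trans (Finset.card_insert_le _ _)
        exact Nat.succ_le_succ (le_of_eq (Finset.card_singleton _))
      omega
    obtain ⟨d, hd⟩ := Finset.card_pos.1 hcard
    have hd' := Finset.mem_sdiff.1 hd
    have hmem := hd'.2
    simp only [Finset.mem_insert, Finset.mem_singleton, not_or] at hmem
    exact ⟨d, hs₄B hd'.1, hmem.1, hmem.2.1, hmem.2.2⟩
  have hacB : AcyclicSet r B := mono_acyclic hT hB h3
  refine ⟨B ∪ {y | y ∉ B ∧ (∃ d ∈ B, r d y) ∧ (∃ u ∈ B, r y u)},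
    Set.subset_union_left, ?_, ?_⟩
  · -- Autonomous
    have F9 : ∀ p ∈ B ∪ {y | y ∉ B ∧ (∃ d ∈ B, r d y) ∧ (∃ u ∈ B, r y u)}, ∀ b ∈ B, ∀ w,
        w ∉ B ∪ {y | y ∉ B ∧ (∃ d ∈ B, r d y) ∧ (∃ u ∈ B, r y u)} → (r p w ↔ r b w) := by
      intro p hp b hb w hw
      have hwB : w ∉ B := fun h => hw (Or.inl h)
      have hcases : (∀ b' ∈ B, r b' w) ∨ (∀ b' ∈ B, r w b') := by
        by_cases hcase : ∃ d ∈ B, r d w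
        · left
          intro b' hb'
          by_contra h
          have hwb' : r w b' := total hT (fun he => hwB (he ▸ hb')) h
          exact hw (Or.inr ⟨hwB, hcase, ⟨b', hb', hwb'⟩⟩)
        · right
          intro b' hb'
          by_contra h
          exact hcase ⟨b', hb', total hT (fun he => hwB (he.symm ▸ hb')) h⟩
      rcases hp with hpB | ⟨hpB, ⟨dp, hdp, hdpp⟩, ⟨up, hup, hpup⟩⟩
      · rcases hcases with hBw | hwB'
        · exact iff_of_true (hBw p hpB) (hBw b hb)
        · exact iff_of_false (fun h => asymm hT h (hwB' p hpB))
            (fun h => asymm hT h (hwB' b hb))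
      · have npw : p ≠ w := by
          rintro rfl
          exact hw (Or.inr ⟨hpB, ⟨dp, hdp, hdpp⟩, ⟨up, hup, hpup⟩⟩)
        have nupp : up ≠ p := fun h => hpB (h ▸ hup)
        have nupw : up ≠ w := fun h => hwB (h ▸ hup)
        have ndpp : dp ≠ p := fun h => hpB (h ▸ hdp)
        have ndpw : dp ≠ w := fun h => hwB (h ▸ hdp)
        rcases hcases with hBw | hwB'
        · -- B → w ; show r p w
          have hpw : r p w := by
            by_contra h
            have hwp : r w p := total hT npw h
            have hiso := hB {up, p, w} {dp, p, w}
              (by rw [card3 nupp nupw npw, card3 ndpp ndpw npw])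
              (by rw [diff3_2 hup hpB hwB, diff3_2 hdp hpB hwB])
            refine no_iso_sink hT hiso ?_ ⟨p, by simp, ?_⟩
            · intro z hz
              rcases Finset.mem_insert.1 hz with rfl | hz
              · exact ⟨w, by simp, hBw z hup⟩
              rcases Finset.mem_insert.1 hz with rfl | hz
              · exact ⟨up, by simp, hpup⟩
              · have : z = w := by simpa using hz
                subst this; exact ⟨p, by simp, hwp⟩
            · intro z hz
              rcases Finset.mem_insert.1 hz with rfl | hz
              · exact asymm hT hdpp
              rcases Finset.mem_insert.1 hz with rfl | hz
              · exact hT.1 z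
              · have : z = w := by simpa using hz
                subst this; exact h
          exact iff_of_true hpw (hBw b hb)
        · -- w → B ; show ¬ r p w
          have hpw : ¬ r p w := by
            intro hpw
            have hiso := hB {dp, p, w} {up, p, w}
              (by rw [card3 ndpp ndpw npw, card3 nupp nupw npw])
              (by rw [diff3_2 hdp hpB hwB, diff3_2 hup hpB hwB])
            refine no_iso_sink hT hiso ?_ ⟨up, by simp, ?_⟩
            · intro z hz
              rcases Finset.mem_insert.1 hz with rfl | hz
              · exact ⟨p, by simp, hdpp⟩
              rcases Finset.mem_insert.1 hz with rfl | hz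
              · exact ⟨w, by simp, hpw⟩
              · have : z = w := by simpa using hz
                subst this; exact ⟨dp, by simp, hwB' dp hdp⟩
            · intro z hz
              rcases Finset.mem_insert.1 hz with rfl | hz
              · exact hT.1 z
              rcases Finset.mem_insert.1 hz with rfl | hz
              · exact asymm hT hpup
              · have : z = w := by simpa using hz
                subst this; exact asymm hT (hwB' up hup)
          exact iff_of_false hpw (fun h => asymm hT h (hwB' b hb))
    intro p hp q hq w hw
    obtain ⟨b₀, hb₀, -⟩ := h3 p q w
    exact (F9 p hp b₀ hb₀ w hw).trans (F9 q hq b₀ hb₀ w hw).symm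
  · -- Acyclic
    rintro ⟨p, hp, q, hq, z, hz, e1, e2, e3⟩
    have npq : p ≠ q := ne_of_r hT e1
    have nqz : q ≠ z := ne_of_r hT e2
    have nzp : z ≠ p := ne_of_r hT e3
    -- helper for the one-in-B case: b → y → z' → b with y, z' cuts
    have oneB : ∀ b y z' : V, b ∈ B → y ∉ B → z' ∉ B → (∃ d ∈ B, r d z') →
        r b y → r y z' → r z' b → False := by
      intro b y z' hb hy hz' hdz' f1 f2 f3
      obtain ⟨d, hd, hdzz⟩ := hdz'
      have nby : b ≠ y := fun h => hy (h ▸ hb)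
      have nbz : b ≠ z' := fun h => hz' (h ▸ hb)
      have nyz : y ≠ z' := ne_of_r hT f2
      have ndy : d ≠ y := fun h => hy (h ▸ hd)
      have ndz : d ≠ z' := fun h => hz' (h ▸ hd)
      have hiso := hB {b, y, z'} {d, y, z'}
        (by rw [card3 nby nbz nyz, card3 ndy ndz nyz])
        (by rw [diff3_2 hb hy hz', diff3_2 hd hy hz'])
      refine no_iso_sink hT hiso ?_ ⟨z', by simp, ?_⟩
      · intro v hv
        rcases Finset.mem_insert.1 hv with rfl | hv
        · exact ⟨y, by simp, f1⟩
        rcases Finset.mem_insert.1 hv with rfl | hv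
        · exact ⟨z', by simp, f2⟩
        · have : v = z' := by simpa using hv
          subst this; exact ⟨b, by simp, f3⟩
      · intro v hv
        rcases Finset.mem_insert.1 hv with rfl | hv
        · exact asymm hT hdzz
        rcases Finset.mem_insert.1 hv with rfl | hv
        · exact asymm hT f2
        · have : v = z' := by simpa using hv
          subst this; exact hT.1 v
    rcases hp with hpB | hpC <;> rcases hq with hqB | hqC <;> rcases hz with hzB | hzC
    · exact hacB ⟨p, hpB, q, hqB, z, hzB, e1, e2, e3⟩
    · exact no_mixed_cycle hT hB h3 z hzC.1 p hpB q hqB ⟨e1, e2, e3⟩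
    · exact no_mixed_cycle hT hB h3 q hqC.1 z hzB p hpB ⟨e3, e1, e2⟩
    · exact oneB p q z hpB hqC.1 hzC.1 hzC.2.1 e1 e2 e3
    · exact no_mixed_cycle hT hB h3 p hpC.1 q hqB z hzB ⟨e2, e3, e1⟩
    · exact oneB q z p hqB hzC.1 hpC.1 hpC.2.1 e2 e3 e1
    · exact oneB z p q hzB hpC.1 hqC.1 hqC.2.1 e3 e1 e2
    · -- all three are cuts
      obtain ⟨dp, hdp, hdpp⟩ := hpC.2.1
      obtain ⟨dq, hdq, hdqq⟩ := hqC.2.1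
      obtain ⟨dz, hdz, hdzz⟩ := hzC.2.1
      obtain ⟨up, hup, hpup⟩ := hpC.2.2
      obtain ⟨uq, huq, hquq⟩ := hqC.2.2
      obtain ⟨uz, huz, hzuz⟩ := hzC.2.2
      obtain ⟨d', hd', hd'p, hd'q⟩ :=
        cut_meet2 hT hB h3 hpC.1 hqC.1 hdp hdq hdpp hdqq
      obtain ⟨f, hf, hfp, hfq, hfz⟩ :=
        cut_meet3 hT hB h3 hpC.1 hqC.1 hzC.1 hd' hdz hd'p hd'q hdzz
      obtain ⟨u', hu', hpu', hqu'⟩ :=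
        cut_meetU2 hT hB h3 hpC.1 hqC.1 hup huq hpup hquq
      obtain ⟨g, hg, hpg, hqg, hzg⟩ :=
        cut_meetU3 hT hB h3 hpC.1 hqC.1 hzC.1 hu' huz hpu' hqu' hzuz
      have nfp : f ≠ p := fun h => hpC.1 (h ▸ hf)
      have nfq : f ≠ q := fun h => hqC.1 (h ▸ hf)
      have nfz : f ≠ z := fun h => hzC.1 (h ▸ hf)
      have ngp : g ≠ p := fun h => hpC.1 (h ▸ hg)
      have ngq : g ≠ q := fun h => hqC.1 (h ▸ hg)
      have ngz : g ≠ z := fun h => hzC.1 (h ▸ hg)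
      have npz : p ≠ z := Ne.symm nzp
      have hiso := hB {f, p, q, z} {g, p, q, z}
        (by rw [card4 nfp nfq nfz npq npz nqz, card4 ngp ngq ngz npq npz nqz])
        (by rw [diff4_3 hf hpC.1 hqC.1 hzC.1, diff4_3 hg hpC.1 hqC.1 hzC.1])
      refine no_iso_sink hT hiso ?_ ⟨g, by simp, ?_⟩
      · intro v hv
        rcases Finset.mem_insert.1 hv with rfl | hv
        · exact ⟨p, by simp, hfp⟩
        rcases Finset.mem_insert.1 hv with rfl | hv
        · exact ⟨q, by simp, e1⟩
        rcases Finset.mem_insert.1 hv with rfl | hv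
        · exact ⟨z, by simp, e2⟩
        · have : v = z := by simpa using hv
          subst this; exact ⟨p, by simp, e3⟩
      · intro v hv
        rcases Finset.mem_insert.1 hv with rfl | hv
        · exact hT.1 v
        rcases Finset.mem_insert.1 hv with rfl | hv
        · exact asymm hT hpg
        rcases Finset.mem_insert.1 hv with rfl | hv
        · exact asymm hT hqg
        · have : v = z := by simpa using hv
          subst this; exact asymm hT hzg

lemma mem_ac_self (hT : IsTournament r) (x : V) : x ∈ acyclicComponent r x := by
  refine ⟨{x}, ⟨rfl, ?_, ?_⟩, rfl⟩
  · intro a ha b hb y _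
    have ha' : a = x := ha
    have hb' : b = x := hb
    rw [ha', hb']
  · rintro ⟨a, ha, b, hb, c, hc, h1, -, -⟩
    have ha' : a = x := ha
    have hb' : b = x := hb
    rw [ha', hb'] at h1
    exact hT.1 x h1

lemma auto_ac (x : V) : Autonomous r (acyclicComponent r x) := by
  intro p hp q hq y hy
  obtain ⟨A₁, hA₁, hp1⟩ := hp
  obtain ⟨A₂, hA₂, hq2⟩ := hq
  have hy1 : y ∉ A₁ := fun h => hy ⟨A₁, hA₁, h⟩
  have hy2 : y ∉ A₂ := fun h => hy ⟨A₂, hA₂, h⟩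
  exact (hA₁.2.1 p hp1 x hA₁.1 y hy1).trans (hA₂.2.1 x hA₂.1 q hq2 y hy2)

lemma cyc_split (hT : IsTournament r) {A : Set V} (hA : Autonomous r A) {u v z : V}
    (hu : u ∈ A) (hv : v ∈ A) (hz : z ∉ A)
    (h1 : r u v) (h2 : r v z) (h3 : r z u) : False := by
  have huz : r u z := (hA u hu v hv z hz).2 h2
  exact asymm hT huz h3

lemma pair_union (hT : IsTournament r) {A₁ A₂ : Set V} {x : V}
    (h1 : x ∈ A₁ ∧ Autonomous r A₁ ∧ AcyclicSet r A₁)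
    (h2 : x ∈ A₂ ∧ Autonomous r A₂ ∧ AcyclicSet r A₂) :
    x ∈ A₁ ∪ A₂ ∧ Autonomous r (A₁ ∪ A₂) ∧ AcyclicSet r (A₁ ∪ A₂) := by
  obtain ⟨hx1, haut1, hac1⟩ := h1
  obtain ⟨hx2, haut2, hac2⟩ := h2
  refine ⟨Or.inl hx1, ?_, ?_⟩
  · intro p hp q hq y hy
    have hy1 : y ∉ A₁ := fun h => hy (Or.inl h)
    have hy2 : y ∉ A₂ := fun h => hy (Or.inr h)
    have key : ∀ p' ∈ A₁ ∪ A₂, (r p' y ↔ r x y) := by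
      rintro p' (h | h)
      · exact haut1 p' h x hx1 y hy1
      · exact haut2 p' h x hx2 y hy2
    exact (key p hp).trans (key q hq).symm
  · rintro ⟨a, ha, b, hb, c, hc, e1, e2, e3⟩
    by_cases ha1 : a ∈ A₁ <;> by_cases hb1 : b ∈ A₁ <;> by_cases hc1 : c ∈ A₁
    · exact hac1 ⟨a, ha1, b, hb1, c, hc1, e1, e2, e3⟩
    · exact cyc_split hT haut1 ha1 hb1 hc1 e1 e2 e3
    · exact cyc_split hT haut1 hc1 ha1 hb1 e3 e1 e2
    · have hb2 : b ∈ A₂ := hb.resolve_left hb1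
      have hc2 : c ∈ A₂ := hc.resolve_left hc1
      by_cases ha2 : a ∈ A₂
      · exact hac2 ⟨a, ha2, b, hb2, c, hc2, e1, e2, e3⟩
      · exact cyc_split hT haut2 hb2 hc2 ha2 e2 e3 e1
    · exact cyc_split hT haut1 hb1 hc1 ha1 e2 e3 e1
    · have ha2 : a ∈ A₂ := ha.resolve_left ha1
      have hc2 : c ∈ A₂ := hc.resolve_left hc1
      by_cases hb2 : b ∈ A₂
      · exact hac2 ⟨a, ha2, b, hb2, c, hc2, e1, e2, e3⟩
      · exact cyc_split hT haut2 hc2 ha2 hb2 e3 e1 e2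
    · have ha2 : a ∈ A₂ := ha.resolve_left ha1
      have hb2 : b ∈ A₂ := hb.resolve_left hb1
      by_cases hc2 : c ∈ A₂
      · exact hac2 ⟨a, ha2, b, hb2, c, hc2, e1, e2, e3⟩
      · exact cyc_split hT haut2 ha2 hb2 hc2 e1 e2 e3
    · have ha2 : a ∈ A₂ := ha.resolve_left ha1
      have hb2 : b ∈ A₂ := hb.resolve_left hb1
      have hc2 : c ∈ A₂ := hc.resolve_left hc1
      exact hac2 ⟨a, ha2, b, hb2, c, hc2, e1, e2, e3⟩

lemma acyc_ac (hT : IsTournament r) (x : V) : AcyclicSet r (acyclicComponent r x) := by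
  rintro ⟨a, ha, b, hb, c, hc, e1, e2, e3⟩
  obtain ⟨A₁, hA₁, ha1⟩ := ha
  obtain ⟨A₂, hA₂, hb2⟩ := hb
  obtain ⟨A₃, hA₃, hc3⟩ := hc
  have h12 := pair_union hT hA₁ hA₂
  have h123 := pair_union hT h12 hA₃
  exact h123.2.2 ⟨a, Or.inl (Or.inl ha1), b, Or.inl (Or.inr hb2), c, Or.inr hc3, e1, e2, e3⟩

lemma ac_subset_mc (hT : IsTournament r) (x : V) :
    acyclicComponent r x ⊆ monomorphicComponent r x :=
  fun z hz => ⟨acyclicComponent r x,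
    ⟨mem_ac_self hT x, acyc_auto_mono hT (auto_ac x) (acyc_ac hT x)⟩, hz⟩

lemma exists_part_sup (hT : IsTournament r) (x : V) (u : Finset V) :
    ↑u ⊆ monomorphicComponent r x →
    ∃ B' : Set V, MonomorphicPart r B' ∧ x ∈ B' ∧ ↑u ⊆ B' := by
  induction u using Finset.induction_on with
  | empty =>
    intro _
    exact ⟨acyclicComponent r x, acyc_auto_mono hT (auto_ac x) (acyc_ac hT x),
      mem_ac_self hT x, by simp⟩
  | @insert v u hvu ih =>
    intro hsub
    obtain ⟨B', hB', hxB', huB'⟩ := ih (fun z hz => hsub (by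
      simp only [Finset.coe_insert, Set.mem_insert_iff]; exact Or.inr hz))
    have hv : v ∈ monomorphicComponent r x := hsub (by simp)
    obtain ⟨Bv, hBv, hvBv⟩ := hv
    refine ⟨B' ∪ Bv, union_mono hT hB' hBv.2 hxB' hBv.1, Or.inl hxB', ?_⟩
    intro z hz
    rcases Set.mem_insert_iff.1 (by rw [Finset.coe_insert] at hz; exact hz) with rfl | hz'
    · exact Or.inr hvBv
    · exact Or.inl (huB' hz')

lemma mc_subset_ac (hT : IsTournament r) (x : V) (s₄ : Finset V)
    (hs₄ : ↑s₄ ⊆ monomorphicComponent r x) (hc : s₄.card = 4) :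
    monomorphicComponent r x ⊆ acyclicComponent r x := by
  intro b hb
  have hsub : ↑(insert b s₄) ⊆ monomorphicComponent r x := by
    intro z hz
    rcases Set.mem_insert_iff.1 (by rw [Finset.coe_insert] at hz; exact hz) with rfl | hz'
    · exact hb
    · exact hs₄ hz'
  obtain ⟨B', hB', hxB', huB'⟩ := exists_part_sup hT x (insert b s₄) hsub
  have hs₄B' : ↑s₄ ⊆ B' := fun z hz => huB' (by
    simp only [Finset.coe_insert, Set.mem_insert_iff]; exact Or.inr hz)
  obtain ⟨C, hBC, hautC, hacC⟩ := mono_subset_acyc_auto hT hB' s₄ hs₄B' hc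
  exact ⟨C, ⟨hBC hxB', hautC, hacC⟩, hBC (huB' (by simp))⟩

end TournAux

end AuxProof

/-- For a subset `A` with at least 4 elements, `A` is an acyclic
component of the tournament iff `A` is a monomorphic component. -/
theorem acyclic_component_iff_monomorphic_component {V : Type u} (r : V → V → Prop)
    (hT : IsTournament r) (A : Set V) (hA : 4 ≤ A.encard) :
    (∃ x : V, A = acyclicComponent r x) ↔ (∃ x : V, A = monomorphicComponent r x) := by
  classical
  obtain ⟨A₄, hA₄sub, hA₄card⟩ := Set.exists_subset_encard_eq hA
  have hfin : A₄.Finite := Set.finite_of_encard_eq_coe (k := 4) (by exact_mod_cast hA₄card)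
  have hs₄A : ↑hfin.toFinset ⊆ A := by rw [Set.Finite.coe_toFinset]; exact hA₄sub
  have hs₄c : hfin.toFinset.card = 4 := by
    have h := hfin.encard_eq_coe_toFinset_card
    rw [hA₄card] at h
    exact_mod_cast h.symm
  constructor
  · rintro ⟨x, rfl⟩
    refine ⟨x, Set.Subset.antisymm (TournAux.ac_subset_mc hT x) ?_⟩
    exact TournAux.mc_subset_ac hT x hfin.toFinset
      (fun z hz => TournAux.ac_subset_mc hT x (hs₄A hz)) hs₄c
  · rintro ⟨x, rfl⟩
    refine ⟨x, Set.Subset.antisymm ?_ (TournAux.ac_subset_mc hT x)⟩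
    exact TournAux.mc_subset_ac hT x hfin.toFinset hs₄A hs₄c
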